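/- If μ_X = μ_Y = 0, then for every t ∈ ℂ the characteristic function of the product P = X·conj(Y) satisfies E_γ[ exp( i·Re( conj(t) · X · conj(Y) ) ) ] = 1 / G(t). -/

import Mathlib

open MeasureTheory ProbabilityTheory Finset
open scoped ENNReal NNReal

noncomputable section

/-- Standard Gaussian measure on `ℝ⁴` (four i.i.d. standard normals). -/
def γ : Measure (Fin 4 → ℝ) := Measure.pi fun _ => gaussianReal 0 1

/-- Standard circularly-symmetric complex Gaussian `U = (g₁ + i g₂)/√2`. -/
def U (ω : Fin 4 → ℝ) : ℂ := ((ω 0 : ℂ) + Complex.I * (ω 1 : ℂ)) / (Real.sqrt 2 : ℂ)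

/-- Standard circularly-symmetric complex Gaussian `V = (g₃ + i g₄)/√2`. -/
def V (ω : Fin 4 → ℝ) : ℂ := ((ω 2 : ℂ) + Complex.I * (ω 3 : ℂ)) / (Real.sqrt 2 : ℂ)

/-- `X = μ_X + σ_X · U`. -/
def X (μX : ℂ) (σX : ℝ) (ω : Fin 4 → ℝ) : ℂ := μX + (σX : ℂ) * U ω

/-- `Y = μ_Y + σ_Y · (conj(ρ) · U + √(1 − |ρ|²) · V)`. -/
def Y (μY : ℂ) (σY : ℝ) (ρ : ℂ) (ω : Fin 4 → ℝ) : ℂ :=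
  μY + (σY : ℂ) * ((starRingEnd ℂ) ρ * U ω +
    (Real.sqrt (1 - ‖ρ‖ ^ 2) : ℂ) * V ω)

/-- `G(t) = 1 + (1/4)σ_X²σ_Y²(1−|ρ|²)|t|² − i σ_X σ_Y Re(conj(t) ρ)`. -/
def G (σX σY : ℝ) (ρ : ℂ) (t : ℂ) : ℂ :=
  1 + (1 / 4 : ℂ) * (σX : ℂ) ^ 2 * (σY : ℂ) ^ 2 * ((1 - ‖ρ‖ ^ 2 : ℝ) : ℂ) *
      ((‖t‖ ^ 2 : ℝ) : ℂ) -
    Complex.I * (σX : ℂ) * (σY : ℂ) * ((((starRingEnd ℂ) t * ρ).re : ℝ) : ℂ)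

/- ## Auxiliary lemmas -/

open Complex Real in
lemma gauss_density (g : ℝ → ℂ) :
    ∫ x, g x ∂(gaussianReal 0 1) = ∫ x : ℝ, (gaussianPDFReal 0 1 x : ℂ) * g x := by
  rw [gaussianReal_of_var_ne_zero 0 one_ne_zero]
  have h : gaussianPDF 0 1 = fun x => (((gaussianPDFReal 0 1 x).toNNReal : ℝ≥0) : ℝ≥0∞) := by
    funext x; rfl
  rw [h, integral_withDensity_eq_integral_smul
    (measurable_gaussianPDFReal 0 1).real_toNNReal]
  congr 1; funext x
  rw [NNReal.smul_def, Real.coe_toNNReal _ (gaussianPDFReal_nonneg 0 1 x), Complex.real_smul]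

open Complex Real in
lemma gauss_int (z c : ℂ) (hz : z.re < 1/2) :
    ∫ x : ℝ, Complex.exp (z * x^2 + c * x) ∂(gaussianReal 0 1)
      = ((Real.sqrt (2*π) : ℂ))⁻¹ * ((π : ℂ)/((1/2 : ℂ) - z))^((1/2):ℂ)
        * Complex.exp (c^2/(2*(1-2*z))) := by
  rw [gauss_density]
  have hpdf : ∀ x : ℝ, (gaussianPDFReal 0 1 x : ℂ) * Complex.exp (z * x^2 + c * x)
      = ((Real.sqrt (2*π) : ℂ))⁻¹ * Complex.exp ((z - 1/2) * x^2 + c * x + 0) := by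
    intro x
    rw [gaussianPDFReal]
    push_cast
    rw [mul_assoc, ← Complex.exp_add, mul_one (2*π),
      (by ring : -((x:ℂ) - 0)^2/(2*1) + (z*x^2 + c*x) = (z - 1/2) * x^2 + c * x + 0)]
  simp_rw [hpdf]
  rw [integral_const_mul, integral_cexp_quadratic (by simp; linarith : (z - 1/2).re < 0) c 0]
  have h1 : -(z - 1/2) = (1/2 : ℂ) - z := by ring
  have h2 : (0 : ℂ) - c^2/(4*(z - 1/2)) = c^2/(2*(1-2*z)) := by
    have : (4:ℂ)*(z-1/2) = -(2*(1-2*z)) := by ring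
    rw [this, zero_sub, div_neg, neg_neg]
  rw [h1, h2, mul_assoc]

open Complex Real in
lemma sqrt2pi_ne : ((Real.sqrt (2*π) : ℂ)) ≠ 0 := by
  simp only [ne_eq, Complex.ofReal_eq_zero]
  positivity

open Complex Real in
lemma gauss_lin (r : ℝ) :
    ∫ x : ℝ, Complex.exp (Complex.I * r * x) ∂(gaussianReal 0 1)
      = Complex.exp (-(r^2 : ℝ)/2 : ℂ) := by
  have h := gauss_int 0 (Complex.I * r) (by norm_num)
  simp only [zero_mul, zero_add, sub_zero, mul_zero, one_mul] at h
  rw [h]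
  have h1 : ((π : ℂ)/((1/2 : ℂ))) = ((2*π : ℝ) : ℂ) := by push_cast; ring
  have h2 : ((2*π : ℝ) : ℂ)^((1/2):ℂ) = ((Real.sqrt (2*π) : ℂ)) := by
    rw [Real.sqrt_eq_rpow, (by norm_num : ((1/2):ℂ) = ((1/2 : ℝ):ℂ)),
      ← Complex.ofReal_cpow (by positivity)]
  rw [h1, h2, inv_mul_cancel₀ sqrt2pi_ne, one_mul]
  congr 1
  have : (Complex.I * r)^2 = -((r:ℂ)^2) := by
    rw [mul_pow, Complex.I_sq]; ring
  rw [this]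
  push_cast
  ring

open Complex Real in
lemma gauss_quad_sq (z : ℂ) (hz : z.re < 1/2) :
    (∫ x : ℝ, Complex.exp (z * x^2) ∂(gaussianReal 0 1))
      * (∫ x : ℝ, Complex.exp (z * x^2) ∂(gaussianReal 0 1)) = 1/(1 - 2*z) := by
  have h := gauss_int z 0 hz
  simp only [zero_mul, add_zero, zero_pow, ne_eq, OfNat.ofNat_ne_zero, not_false_eq_true,
    zero_div, Complex.exp_zero, mul_one] at h
  rw [h]
  have hz2 : ((1/2 : ℂ) - z) ≠ 0 := by
    intro hc
    have : (1/2 : ℝ) = z.re := by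
      have := congrArg Complex.re (sub_eq_zero.mp hc)
      simpa using this
    linarith
  have hpi : (π : ℂ) ≠ 0 := by simpa using Real.pi_ne_zero
  have hw : ((π : ℂ)/((1/2 : ℂ) - z)) ≠ 0 := div_ne_zero hpi hz2
  have key : ((π : ℂ)/((1/2 : ℂ) - z))^((1/2):ℂ) * ((π : ℂ)/((1/2 : ℂ) - z))^((1/2):ℂ)
      = (π : ℂ)/((1/2 : ℂ) - z) := by
    rw [← Complex.cpow_add _ _ hw]
    norm_num
  have hsq : ((Real.sqrt (2*π) : ℂ))⁻¹ * ((Real.sqrt (2*π) : ℂ))⁻¹ = ((2*π : ℝ) : ℂ)⁻¹ := by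
    rw [← mul_inv]
    congr 1
    rw [← Complex.ofReal_mul, Real.mul_self_sqrt (by positivity)]
  calc ((Real.sqrt (2*π) : ℂ))⁻¹ * ((π : ℂ)/((1/2 : ℂ) - z))^((1/2):ℂ)
        * (((Real.sqrt (2*π) : ℂ))⁻¹ * ((π : ℂ)/((1/2 : ℂ) - z))^((1/2):ℂ))
      = (((Real.sqrt (2*π) : ℂ))⁻¹ * ((Real.sqrt (2*π) : ℂ))⁻¹)
        * (((π : ℂ)/((1/2 : ℂ) - z))^((1/2):ℂ) * ((π : ℂ)/((1/2 : ℂ) - z))^((1/2):ℂ)) := by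
        ring
    _ = ((2*π : ℝ) : ℂ)⁻¹ * ((π : ℂ)/((1/2 : ℂ) - z)) := by rw [hsq, key]
    _ = 1/(1 - 2*z) := by
        push_cast
        have h12 : (1:ℂ) - 2*z ≠ 0 := by
          intro hc; exact hz2 (by linear_combination hc/2)
        field_simp

open Complex Real in
lemma lin_step (K L : ℝ) :
    ∫ x : ℝ, Complex.exp (Complex.I * ((K + L*x : ℝ) : ℂ)) ∂(gaussianReal 0 1)
      = Complex.exp (Complex.I * K) * Complex.exp (-(L^2 : ℝ)/2 : ℂ) := by
  have hsplit : ∀ x : ℝ, Complex.I * ((K + L*x : ℝ) : ℂ)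
      = Complex.I * (K:ℂ) + (Complex.I * L) * x := by
    intro x; push_cast; ring
  simp_rw [hsplit, Complex.exp_add]
  rw [integral_const_mul, gauss_lin L]

lemma pi_step {n : ℕ} (f : (Fin (n+1) → ℝ) → ℂ) (hf : Measurable f) (hb : ∀ ω, ‖f ω‖ ≤ 1) :
    ∫ ω, f ω ∂(Measure.pi fun _ : Fin (n+1) => gaussianReal 0 1)
      = ∫ x : ℝ, ∫ y : Fin n → ℝ, f (Fin.cons x y)
          ∂(Measure.pi fun _ : Fin n => gaussianReal 0 1) ∂(gaussianReal 0 1) := by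
  have mp := (measurePreserving_piFinSuccAbove (fun _ : Fin (n+1) => gaussianReal 0 1) 0).symm
  rw [← mp.integral_comp']
  have hint : Integrable (fun p : ℝ × (Fin n → ℝ) =>
      f ((MeasurableEquiv.piFinSuccAbove (fun _ : Fin (n+1) => ℝ) 0).symm p))
      ((gaussianReal 0 1).prod (Measure.pi fun _ : Fin n => gaussianReal 0 1)) := by
    refine (integrable_const (1:ℝ)).mono'
      ((hf.comp (MeasurableEquiv.measurable _)).aestronglyMeasurable)
      (ae_of_all _ fun p => hb _)
  rw [integral_prod _ hint]
  congr 1; funext x; congr 1; funext y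
  congr 1
  simp [MeasurableEquiv.piFinSuccAbove_symm_apply, Fin.insertNthEquiv, Fin.insertNth_zero]

lemma measurable_cons' {n : ℕ} (x : ℝ) :
    Measurable (fun y : Fin n → ℝ => (Fin.cons x y : Fin (n+1) → ℝ)) := by
  refine measurable_pi_iff.mpr fun i => ?_
  refine Fin.cases ?_ (fun j => ?_) i
  · simp only [Fin.cons_zero]; exact measurable_const
  · simp only [Fin.cons_succ]; exact measurable_pi_apply j

lemma pi4 (f : (Fin 4 → ℝ) → ℂ) (hf : Measurable f) (hb : ∀ ω, ‖f ω‖ ≤ 1) :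
    ∫ ω, f ω ∂(Measure.pi fun _ : Fin 4 => gaussianReal 0 1)
      = ∫ a : ℝ, ∫ b : ℝ, ∫ c : ℝ, ∫ d : ℝ, f ![a,b,c,d]
          ∂(gaussianReal 0 1) ∂(gaussianReal 0 1) ∂(gaussianReal 0 1) ∂(gaussianReal 0 1) := by
  rw [pi_step f hf hb]
  congr 1; funext a
  rw [pi_step (fun y => f (Fin.cons a y)) (hf.comp (measurable_cons' a)) (fun y => hb _)]
  congr 1; funext b
  rw [pi_step (fun y => f (Fin.cons a (Fin.cons b y)))
    ((hf.comp (measurable_cons' a)).comp (measurable_cons' b)) (fun y => hb _)]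
  congr 1; funext c
  rw [pi_step (fun y => f (Fin.cons a (Fin.cons b (Fin.cons c y))))
    (((hf.comp (measurable_cons' a)).comp (measurable_cons' b)).comp
    (measurable_cons' c)) (fun y => hb _)]
  congr 1; funext d
  have h1 : ∀ y : Fin 0 → ℝ,
      (Fin.cons a (Fin.cons b (Fin.cons c (Fin.cons d y))) : Fin 4 → ℝ) = ![a,b,c,d] := by
    intro y
    rw [Subsingleton.elim y ![]]
    rfl
  simp_rw [h1]
  rw [integral_const]
  simp

lemma re_exponent (σX σY : ℝ) (ρ t : ℂ) (ω : Fin 4 → ℝ) :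
    ((starRingEnd ℂ) t * (X 0 σX ω * (starRingEnd ℂ) (Y 0 σY ρ ω))).re
      = (σX*σY*(((starRingEnd ℂ) t * ρ).re)/2) * ((ω 0)^2 + (ω 1)^2)
        + (σX*σY*(Real.sqrt (1 - ‖ρ‖ ^ 2))/2) *
          ((t.re * ω 0 + t.im * ω 1) * ω 2 + (-t.im * ω 0 + t.re * ω 1) * ω 3) := by
  have h2' : (Real.sqrt 2 : ℂ) ≠ 0 := by
    simp only [ne_eq, Complex.ofReal_eq_zero]
    positivity
  simp only [X, Y, U, V, zero_add, map_add, map_mul, Complex.conj_conj, map_div₀,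
    Complex.conj_ofReal, map_ofNat, Complex.conj_I]
  field_simp
  simp only [Complex.mul_re, Complex.mul_im, Complex.add_re, Complex.add_im, Complex.sub_re,
    Complex.sub_im, Complex.ofReal_re, Complex.ofReal_im, Complex.I_re, Complex.I_im,
    Complex.conj_re, Complex.conj_im, Complex.div_re, Complex.div_im, Complex.normSq_ofReal,
    Complex.ofReal_mul, Complex.neg_re, Complex.neg_im, Complex.norm_mul_self_eq_normSq]
  ring_nf
  have h3 : (Real.sqrt 2 : ℝ)^2 = 2 := Real.sq_sqrt (by norm_num)
  have h4 : Complex.normSq (((Real.sqrt 2 : ℝ) : ℂ)^2) = 4 := by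
    rw [← Complex.ofReal_pow, Complex.normSq_ofReal, h3]; norm_num
  simp only [h4]
  simp only [← Complex.ofReal_pow, Complex.ofReal_re, Complex.ofReal_im, h3]
  ring

/-- Null-hypothesis specialization: if `μ_X = μ_Y = 0` then the characteristic
function of the product `P = X conj(Y)` is `1 / G(t)`. -/
theorem stmt_6 (μX μY : ℂ) (σX σY : ℝ) (hσX : 0 < σX) (hσY : 0 < σY)
    (ρ : ℂ) (hρ : ‖ρ‖ < 1) (hμX : μX = 0) (hμY : μY = 0) (t : ℂ) :
    ∫ ω, Complex.exp (Complex.I *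
        ((((starRingEnd ℂ) t * (X μX σX ω * (starRingEnd ℂ) (Y μY σY ρ ω))).re : ℝ) : ℂ)) ∂γ =
      1 / G σX σY ρ t := by
  subst hμX hμY
  set A : ℝ := σX*σY*(((starRingEnd ℂ) t * ρ).re)/2 with hA
  set B : ℝ := σX*σY*(Real.sqrt (1 - ‖ρ‖ ^ 2))/2 with hB
  set E : ℝ → ℝ → ℝ → ℝ → ℝ := fun a b c d =>
    A * (a^2 + b^2) + B * ((t.re * a + t.im * b) * c + (-t.im * a + t.re * b) * d) with hE
  have hre : ∀ ω : Fin 4 → ℝ,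
      ((starRingEnd ℂ) t * (X 0 σX ω * (starRingEnd ℂ) (Y 0 σY ρ ω))).re
        = E (ω 0) (ω 1) (ω 2) (ω 3) := fun ω => re_exponent σX σY ρ t ω
  simp_rw [hre]
  -- apply pi4
  have hmeas : Measurable (fun ω : Fin 4 → ℝ =>
      Complex.exp (Complex.I * ((E (ω 0) (ω 1) (ω 2) (ω 3) : ℝ) : ℂ))) := by
    apply Complex.measurable_exp.comp
    apply Measurable.const_mul
    apply Complex.measurable_ofReal.comp
    fun_prop
  have hbdd : ∀ ω : Fin 4 → ℝ,
      ‖Complex.exp (Complex.I * ((E (ω 0) (ω 1) (ω 2) (ω 3) : ℝ) : ℂ))‖ ≤ 1 := by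
    intro ω
    rw [Complex.norm_exp]
    simp [Complex.mul_re]
  rw [show γ = Measure.pi fun _ : Fin 4 => gaussianReal 0 1 from rfl,
    pi4 _ hmeas hbdd]
  -- simplify coordinates of ![a,b,c,d]
  simp only [Matrix.cons_val_zero, Matrix.cons_val_one, Matrix.head_cons,
    Matrix.cons_val_two, Matrix.tail_cons, Matrix.cons_val_three, Matrix.head_fin_const]
  -- innermost integral over d
  have hd : ∀ a b c : ℝ,
      ∫ d : ℝ, Complex.exp (Complex.I * ((E a b c d : ℝ) : ℂ)) ∂(gaussianReal 0 1)
        = Complex.exp (Complex.I * ((A * (a^2+b^2) + B * ((t.re * a + t.im * b) * c) : ℝ) : ℂ))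
          * Complex.exp (-(((B * (-t.im * a + t.re * b))^2 : ℝ))/2 : ℂ) := by
    intro a b c
    have : ∀ d : ℝ, E a b c d
        = (A * (a^2+b^2) + B * ((t.re * a + t.im * b) * c))
          + (B * (-t.im * a + t.re * b)) * d := by
      intro d; rw [hE]; ring
    simp_rw [this]
    rw [lin_step]
  simp_rw [hd]
  -- integral over c
  have hc : ∀ a b : ℝ,
      ∫ c : ℝ, Complex.exp (Complex.I * ((A * (a^2+b^2) + B * ((t.re * a + t.im * b) * c) : ℝ) : ℂ))
          * Complex.exp (-(((B * (-t.im * a + t.re * b))^2 : ℝ))/2 : ℂ) ∂(gaussianReal 0 1)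
        = (Complex.exp (Complex.I * ((A * (a^2+b^2) : ℝ) : ℂ))
            * Complex.exp (-(((B * (t.re * a + t.im * b))^2 : ℝ))/2 : ℂ))
          * Complex.exp (-(((B * (-t.im * a + t.re * b))^2 : ℝ))/2 : ℂ) := by
    intro a b
    rw [integral_mul_const]
    congr 1
    have : ∀ c : ℝ, A * (a^2+b^2) + B * ((t.re * a + t.im * b) * c)
        = (A * (a^2+b^2)) + (B * (t.re * a + t.im * b)) * c := by
      intro c; ring
    simp_rw [this]
    rw [lin_step]
  simp_rw [hc]
  -- collapse to cexp (z a²) * cexp (z b²)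
  set z : ℂ := Complex.I * (A : ℂ) + ((-(B^2*(t.re^2+t.im^2))/2 : ℝ) : ℂ) with hz
  have hcollapse : ∀ a b : ℝ,
      (Complex.exp (Complex.I * ((A * (a^2+b^2) : ℝ) : ℂ))
          * Complex.exp (-(((B * (t.re * a + t.im * b))^2 : ℝ))/2 : ℂ))
        * Complex.exp (-(((B * (-t.im * a + t.re * b))^2 : ℝ))/2 : ℂ)
      = Complex.exp (z * (a:ℂ)^2) * Complex.exp (z * (b:ℂ)^2) := by
    intro a b
    rw [← Complex.exp_add, ← Complex.exp_add, ← Complex.exp_add]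
    congr 1
    rw [hz]
    push_cast
    ring
  simp_rw [hcollapse]
  -- now the two quadratic integrals
  have hzre : z.re < 1/2 := by
    rw [hz]
    simp only [Complex.add_re, Complex.mul_re, Complex.I_re, Complex.ofReal_re,
      Complex.I_im, Complex.ofReal_im, zero_mul, one_mul]
    have : (0:ℝ) ≤ B^2*(t.re^2+t.im^2) := by positivity
    norm_num
    nlinarith
  have hsplit2 : ∀ a : ℝ,
      ∫ b : ℝ, Complex.exp (z * (a:ℂ)^2) * Complex.exp (z * (b:ℂ)^2) ∂(gaussianReal 0 1)
        = Complex.exp (z * (a:ℂ)^2)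
          * ∫ b : ℝ, Complex.exp (z * (b:ℂ)^2) ∂(gaussianReal 0 1) := by
    intro a; rw [integral_const_mul]
  simp_rw [hsplit2]
  rw [integral_mul_const, gauss_quad_sq z hzre]
  -- finally 1 - 2z = G
  have hs : Real.sqrt (1 - ‖ρ‖^2) ^ 2 = 1 - ‖ρ‖^2 :=
    Real.sq_sqrt (by nlinarith [norm_nonneg ρ])
  have habs : ‖t‖^2 = t.re^2 + t.im^2 := by
    rw [Complex.sq_norm, Complex.normSq_apply]; ring
  have hG : G σX σY ρ t = 1 - 2*z := by
    rw [G, ← hs, habs, hz, hA, hB]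
    push_cast
    ring
  rw [hG]
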